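/- arXiv:math/0207033 — 6 statements merged into one kernel-verified Lean document; each statement's English description precedes it below -/
import Mathlib

section
/- For any problem with states having positive populations π₁,…,π_s summing to Π, and house size r, the quota vector q_i = r·π_i/Π satisfies Σ_i q_i = r, and there exists an allocation α (a vector of non-negative integers summing to r) with ⌊q_i⌋ ≤ α_i ≤ ⌈q_i⌉ for all i. -/
/-- For any problem with states having positive populations summing to `Π`
and house size `r`, the quotas `q i = r * π i / Pi` sum to `r`, and there
exists an allocation (non-negative integers summing to `r`) satisfying quota. -/
theorem stmt_0 (s : ℕ) (hs : 0 < s) (π : Fin s → ℝ) (hπ : ∀ i, 0 < π i)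
    (r : ℕ) (Pi : ℝ) (hPi : Pi = ∑ i, π i)
    (q : Fin s → ℝ) (hq : ∀ i, q i = r * π i / Pi) :
    (∑ i, q i = r) ∧
    ∃ α : Fin s → ℕ, (∑ i, α i = r) ∧
      ∀ i, ⌊q i⌋ ≤ (α i : ℤ) ∧ (α i : ℤ) ≤ ⌈q i⌉ := by
  have hPipos : 0 < Pi := by
    rw [hPi]
    exact Finset.sum_pos (fun i _ => hπ i) (by simp [Finset.univ_nonempty_iff, ← Fin.pos_iff_nonempty, hs])
  have hsum : ∑ i, q i = r := by
    have : ∑ i, q i = (r * ∑ i, π i) / Pi := by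
      rw [Finset.mul_sum, Finset.sum_div]
      exact Finset.sum_congr rfl fun i _ => hq i
    rw [this, ← hPi, mul_div_assoc, div_self hPipos.ne', mul_one]
  refine ⟨hsum, ?_⟩
  have hqnn : ∀ i, 0 ≤ q i := fun i => by
    rw [hq i]
    exact div_nonneg (mul_nonneg (Nat.cast_nonneg r) (hπ i).le) hPipos.le
  -- extended quota function and partial sums
  set Q' : ℕ → ℝ := fun n => if h : n < s then q ⟨n, h⟩ else 0 with hQ'
  set S : ℕ → ℝ := fun n => ∑ i ∈ Finset.range n, Q' i with hS
  have hSsucc : ∀ n, S (n + 1) = S n + Q' n := fun n => Finset.sum_range_succ _ n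
  set β : ℕ → ℤ := fun n => ⌊S (n + 1)⌋ - ⌊S n⌋ with hβ
  have hlow : ∀ n, ⌊Q' n⌋ ≤ β n := by
    intro n
    have : ⌊S n⌋ + ⌊Q' n⌋ ≤ ⌊S (n + 1)⌋ := by
      rw [hSsucc n]
      apply Int.le_floor.mpr
      push_cast
      exact add_le_add (Int.floor_le _) (Int.floor_le _)
    simp only [hβ]; omega
  have hhigh : ∀ n, β n ≤ ⌈Q' n⌉ := by
    intro n
    have : ⌊S (n + 1)⌋ ≤ ⌊S n⌋ + ⌈Q' n⌉ := by
      rw [hSsucc n]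
      calc ⌊S n + Q' n⌋ ≤ ⌊S n + (⌈Q' n⌉ : ℝ)⌋ :=
            Int.floor_le_floor (by linarith [Int.le_ceil (Q' n)])
        _ = ⌊S n⌋ + ⌈Q' n⌉ := Int.floor_add_intCast _ _
    simp only [hβ]; omega
  have hQ'eq : ∀ i : Fin s, Q' i = q i := by
    intro i; simp [hQ', i.isLt]
  have hβnn : ∀ i : Fin s, 0 ≤ β i := by
    intro i
    refine le_trans ?_ (hlow i)
    rw [hQ'eq i]
    exact Int.floor_nonneg.mpr (hqnn i)
  refine ⟨fun i => (β i).toNat, ?_, ?_⟩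
  · have htel : ∑ i ∈ Finset.range s, β i = ⌊S s⌋ - ⌊S 0⌋ :=
      Finset.sum_range_sub (fun n => ⌊S n⌋) s
    have hS0 : S 0 = 0 := by simp [hS]
    have hSs : S s = r := by
      rw [hS]
      simp only
      rw [Finset.sum_range fun i => Q' i]
      rw [show (∑ i : Fin s, Q' i) = ∑ i : Fin s, q i from Finset.sum_congr rfl fun i _ => hQ'eq i]
      exact hsum
    have hsumβ : (∑ i : Fin s, β i : ℤ) = r := by
      rw [Fin.sum_univ_eq_sum_range (fun n => β n) s, htel, hS0, hSs]
      simp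
    have hcast : ((∑ i : Fin s, (β i).toNat : ℕ) : ℤ) = r := by
      push_cast
      rw [Finset.sum_congr rfl fun i _ => Int.toNat_of_nonneg (hβnn i)]
      exact hsumβ
    exact_mod_cast hcast
  · intro i
    constructor
    · rw [Int.toNat_of_nonneg (hβnn i)]
      rw [← hQ'eq i]
      exact hlow i
    · rw [Int.toNat_of_nonneg (hβnn i)]
      rw [← hQ'eq i]
      exact hhigh i
end

section
/- Given quotas q_i ≥ 0 summing to r ∈ ℕ, and lower bounds l_i ∈ ℕ, there exists an allocation α (non-negative integers summing to r) satisfying quota (⌊q_i⌋ ≤ α_i ≤ ⌈q_i⌉ for all i) and α_i ≥ l_i for all i, if and only if l_i ≤ ⌈q_i⌉ for all i and Σ_i max(l_i, ⌊q_i⌋) ≤ r. -/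
lemma sandwich {ι : Type*} [DecidableEq ι] (t : Finset ι) :
    ∀ (a b : ι → ℕ) (r : ℕ), (∀ i ∈ t, a i ≤ b i) →
    ∑ i ∈ t, a i ≤ r → r ≤ ∑ i ∈ t, b i →
    ∃ α : ι → ℕ, (∀ i ∈ t, a i ≤ α i ∧ α i ≤ b i) ∧ ∑ i ∈ t, α i = r := by
  induction t using Finset.induction_on with
  | empty =>
    intro a b r _ h1 h2
    simp only [Finset.sum_empty] at h1 h2
    exact ⟨a, by simp, by simp; omega⟩
  | @insert i t hi ih =>
    intro a b r hab h1 h2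
    rw [Finset.sum_insert hi] at h1 h2
    have haibi : a i ≤ b i := hab i (Finset.mem_insert_self i t)
    have habt : ∀ j ∈ t, a j ≤ b j := fun j hj => hab j (Finset.mem_insert_of_mem hj)
    have hSab : ∑ j ∈ t, a j ≤ ∑ j ∈ t, b j := Finset.sum_le_sum habt
    set αi := max (a i) (r - ∑ j ∈ t, b j) with hαi
    have h3 : a i ≤ αi := le_max_left _ _
    have h4 : αi ≤ b i := by omega
    have h5 : ∑ j ∈ t, a j ≤ r - αi := by omega
    have h6 : r - αi ≤ ∑ j ∈ t, b j := by omega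
    obtain ⟨α, hα1, hα2⟩ := ih a b (r - αi) habt h5 h6
    refine ⟨Function.update α i αi, ?_, ?_⟩
    · intro j hj
      rcases Finset.mem_insert.mp hj with rfl | hj
      · simpa using ⟨h3, h4⟩
      · rw [Function.update_of_ne (ne_of_mem_of_not_mem hj hi)]
        exact hα1 j hj
    · rw [Finset.sum_insert hi, Function.update_self]
      rw [Finset.sum_congr rfl fun j hj =>
        Function.update_of_ne (ne_of_mem_of_not_mem hj hi) αi α, hα2]
      omega

/-- Given quotas `q i ≥ 0` summing to `r ∈ ℕ` and lower bounds `l i ∈ ℕ`,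
there exists an allocation satisfying quota and with lower bound `l`
iff `l i ≤ ⌈q i⌉` for all `i` and `∑ i, max (l i) ⌊q i⌋ ≤ r`. -/
theorem stmt_1 (s : ℕ) (q : Fin s → ℝ) (hq : ∀ i, 0 ≤ q i)
    (r : ℕ) (hsum : ∑ i, q i = r) (l : Fin s → ℕ) :
    (∃ α : Fin s → ℕ, (∑ i, α i = r) ∧
        (∀ i, ⌊q i⌋ ≤ (α i : ℤ) ∧ (α i : ℤ) ≤ ⌈q i⌉) ∧
        (∀ i, l i ≤ α i)) ↔
      ((∀ i, (l i : ℤ) ≤ ⌈q i⌉) ∧ ∑ i, max (l i : ℤ) ⌊q i⌋ ≤ (r : ℤ)) := by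
  have hfl : ∀ i, 0 ≤ ⌊q i⌋ := fun i => Int.floor_nonneg.mpr (hq i)
  have hcl : ∀ i, 0 ≤ ⌈q i⌉ := fun i => Int.ceil_nonneg (hq i)
  constructor
  · rintro ⟨α, hsumα, hquota, hlb⟩
    constructor
    · intro i
      exact le_trans (Int.ofNat_le.mpr (hlb i)) (hquota i).2
    · calc ∑ i, max (l i : ℤ) ⌊q i⌋ ≤ ∑ i, (α i : ℤ) := by
            refine Finset.sum_le_sum fun i _ => max_le ?_ (hquota i).1
            exact_mod_cast hlb i
        _ = (r : ℤ) := by exact_mod_cast hsumα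
  · rintro ⟨h1, h2⟩
    set a : Fin s → ℕ := fun i => max (l i) (⌊q i⌋).toNat with ha
    set b : Fin s → ℕ := fun i => (⌈q i⌉).toNat with hb
    have hacast : ∀ i, (a i : ℤ) = max (l i : ℤ) ⌊q i⌋ := by
      intro i
      simp [ha, Int.toNat_of_nonneg (hfl i), Nat.cast_max]
    have hbcast : ∀ i, (b i : ℤ) = ⌈q i⌉ := fun i => Int.toNat_of_nonneg (hcl i)
    have hab : ∀ i ∈ Finset.univ, a i ≤ b i := by
      intro i _
      have := h1 i
      have := Int.floor_le_ceil (q i)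
      have := hacast i; have := hbcast i
      omega
    have hsa : ∑ i, a i ≤ r := by
      have : ((∑ i, a i : ℕ) : ℤ) ≤ (r : ℤ) := by
        rw [Nat.cast_sum]
        calc ∑ i, (a i : ℤ) = ∑ i, max (l i : ℤ) ⌊q i⌋ :=
              Finset.sum_congr rfl fun i _ => hacast i
          _ ≤ (r : ℤ) := h2
      exact_mod_cast this
    have hsb : r ≤ ∑ i, b i := by
      have : (r : ℝ) ≤ ((∑ i, b i : ℕ) : ℝ) := by
        rw [← hsum, Nat.cast_sum]
        refine Finset.sum_le_sum fun i _ => ?_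
        have : ((b i : ℤ) : ℝ) = (⌈q i⌉ : ℝ) := by exact_mod_cast hbcast i
        push_cast at this
        rw [this]
        exact Int.le_ceil (q i)
      exact_mod_cast this
    obtain ⟨α, hα1, hα2⟩ := sandwich Finset.univ a b r hab hsa hsb
    refine ⟨α, hα2, fun i => ?_, fun i => ?_⟩
    · obtain ⟨hl, hr⟩ := hα1 i (Finset.mem_univ i)
      constructor
      · have : (a i : ℤ) ≤ (α i : ℤ) := by exact_mod_cast hl
        rw [hacast i] at this
        omega
      · have : (α i : ℤ) ≤ (b i : ℤ) := by exact_mod_cast hr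
        rwa [hbcast i] at this
    · exact le_trans (le_max_left _ _) (hα1 i (Finset.mem_univ i)).1
end

section
/- Let q'_1,…,q'_s ∈ [0,1), and let U be a random variable uniformly distributed on [0,1). Define Q_i(U) = U + Σ_{j≤i} q'_j and A'_i(U) = indicator that [Q_{i-1}(U), Q_i(U)) contains an integer. Then E[A'_i(U)] = q'_i for every i; equivalently, the Lebesgue measure of {u ∈ [0,1) : [Q_{i-1}(u), Q_i(u)) contains an integer} equals q'_i. -/
open MeasureTheory

/-- With `U` uniform on `[0,1)`, the probability that the interval
`[Q_{i-1}(U), Q_i(U))` contains an integer equals `q' i`. -/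
theorem stmt_5 (s : ℕ) (q' : ℕ → ℝ)
    (h : ∀ i < s, 0 ≤ q' i ∧ q' i < 1) :
    ∀ i < s,
      volume {u : ℝ | u ∈ Set.Ico (0 : ℝ) 1 ∧
          ∃ n : ℤ, u + ∑ j ∈ Finset.range i, q' j ≤ (n : ℝ) ∧
            (n : ℝ) < u + ∑ j ∈ Finset.range (i + 1), q' j}
        = ENNReal.ofReal (q' i) := by
  intro i hi
  obtain ⟨hq0, hq1⟩ := h i hi
  set c := ∑ j ∈ Finset.range i, q' j with hc
  set q := q' i with hq
  have hsum : ∑ j ∈ Finset.range (i+1), q' j = c + q := by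
    rw [Finset.sum_range_succ]
  set n0 : ℤ := ⌈c⌉ with hn0
  set d : ℝ := (n0 : ℝ) - c with hd
  have hcle : c ≤ (n0 : ℝ) := Int.le_ceil c
  have hclt : (n0 : ℝ) < c + 1 := Int.ceil_lt_add_one c
  have hd0 : 0 ≤ d := by simp only [hd]; linarith
  have hd1 : d < 1 := by simp only [hd]; linarith
  have hset : {u : ℝ | u ∈ Set.Ico (0 : ℝ) 1 ∧
      ∃ n : ℤ, u + ∑ j ∈ Finset.range i, q' j ≤ (n : ℝ) ∧
        (n : ℝ) < u + ∑ j ∈ Finset.range (i + 1), q' j}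
      = (Set.Ioc (d - q) d ∩ Set.Ici 0) ∪ Set.Ioo (1 + d - q) 1 := by
    ext u
    simp only [Set.mem_setOf_eq, Set.mem_Ico, Set.mem_union, Set.mem_inter_iff,
      Set.mem_Ioc, Set.mem_Ici, Set.mem_Ioo, hsum, ← hc]
    constructor
    · rintro ⟨⟨hu0, hu1⟩, n, hn1, hn2⟩
      have hn_ge : n0 ≤ n := Int.ceil_le.mpr (by linarith)
      have hn_le : n ≤ n0 + 1 := by
        have h2 : (n : ℝ) < (n0 : ℝ) + 2 := by linarith
        have h3 : n < n0 + 2 := by exact_mod_cast h2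
        omega
      rcases (by omega : n = n0 ∨ n = n0 + 1) with rfl | rfl
      · left
        have e1 : ((n0 : ℤ) : ℝ) = n0 := rfl
        refine ⟨⟨?_, ?_⟩, hu0⟩ <;> simp only [hd] <;> linarith
      · right
        push_cast at hn1 hn2
        constructor
        · simp only [hd]; linarith
        · exact hu1
    · rintro (⟨⟨h1, h2⟩, h3⟩ | ⟨h1, h2⟩)
      · refine ⟨⟨h3, by linarith⟩, n0, ?_, ?_⟩ <;> simp only [hd] at h1 h2 <;> linarith
      · have hu0 : 0 ≤ u := by linarith
        refine ⟨⟨hu0, h2⟩, n0 + 1, ?_, ?_⟩ <;> push_cast <;>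
          simp only [hd] at h1 <;> linarith
  rw [hset]
  have hdisj : Disjoint (Set.Ioc (d - q) d ∩ Set.Ici 0) (Set.Ioo (1 + d - q) 1) := by
    rw [Set.disjoint_left]
    rintro x ⟨⟨_, hx2⟩, _⟩ ⟨hy1, _⟩
    linarith
  rw [measure_union hdisj measurableSet_Ioo,
    Real.volume_Ioo]
  rcases le_or_gt q d with hcase | hcase
  · have heq : Set.Ioc (d - q) d ∩ Set.Ici 0 = Set.Ioc (d - q) d := by
      apply Set.inter_eq_left.mpr
      intro x hx
      simp only [Set.mem_Ioc] at hx
      simp only [Set.mem_Ici]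
      linarith [hx.1]
    rw [heq, Real.volume_Ioc]
    have : ENNReal.ofReal (1 - (1 + d - q)) = 0 := by
      rw [ENNReal.ofReal_eq_zero]; linarith
    rw [this, add_zero]
    congr 1
    ring
  · have heq : Set.Ioc (d - q) d ∩ Set.Ici 0 = Set.Icc 0 d := by
      ext x
      simp only [Set.mem_inter_iff, Set.mem_Ioc, Set.mem_Ici, Set.mem_Icc]
      constructor
      · rintro ⟨⟨_, hx2⟩, hx3⟩; exact ⟨hx3, hx2⟩
      · rintro ⟨hx1, hx2⟩; exact ⟨⟨by linarith, hx2⟩, hx1⟩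
    rw [heq, Real.volume_Icc]
    rw [show (1 : ℝ) - (1 + d - q) = q - d by ring, sub_zero,
      ← ENNReal.ofReal_add hd0 (by linarith)]
    congr 1
    ring
end

section
/- Let q_1,…,q_s ≥ 0 with Σ_i q_i = r ∈ ℕ, let q'_i = q_i − ⌊q_i⌋, and for u ∈ [0,1) define the allocation A_i(u) = ⌊q_i⌋ + A'_i(u) where A'_i(u) is the indicator that [u + Σ_{j<i} q'_j, u + Σ_{j≤i} q'_j) contains an integer. Then for every u ∈ [0,1), A(u) is an allocation satisfying quota: Σ_i A_i(u) = r and ⌊q_i⌋ ≤ A_i(u) ≤ ⌈q_i⌉ for all i. -/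
open Classical in
lemma ind_eq_ceil_sub (a b : ℝ) (hab : a ≤ b) (hba : b < a + 1) :
    ((if ∃ n : ℤ, a ≤ (n : ℝ) ∧ (n : ℝ) < b then 1 else 0) : ℤ) = ⌈b⌉ - ⌈a⌉ := by
  have h1 : ⌈a⌉ ≤ ⌈b⌉ := Int.ceil_le_ceil hab
  have h2 : ⌈b⌉ ≤ ⌈a⌉ + 1 := by
    have := Int.ceil_le_ceil hba.le
    rwa [Int.ceil_add_one] at this
  split_ifs with h
  · obtain ⟨n, hn1, hn2⟩ := h
    have ha : ⌈a⌉ ≤ n := Int.ceil_le.mpr hn1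
    have hb : n < ⌈b⌉ := Int.lt_ceil.mpr hn2
    omega
  · by_contra hc
    have hd : ⌈b⌉ = ⌈a⌉ + 1 := by omega
    apply h
    refine ⟨⌈a⌉, Int.le_ceil a, ?_⟩
    have := Int.ceil_lt_add_one b
    rw [hd] at this
    push_cast at this ⊢
    linarith

open Classical in
/-- The stochastic apportionment allocation
`A i u = ⌊q i⌋ + A' i u` is, for every shift `u ∈ [0,1)`, an allocation
satisfying quota: it sums to `r` and lies between lower and upper quotas. -/
theorem stmt_6 (s r : ℕ) (q : ℕ → ℝ) (hq : ∀ i < s, 0 ≤ q i)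
    (hsum : ∑ i ∈ Finset.range s, q i = r)
    (u : ℝ) (hu : 0 ≤ u ∧ u < 1)
    (A : ℕ → ℤ)
    (hA : ∀ i, A i = ⌊q i⌋ +
      (if ∃ n : ℤ, u + ∑ j ∈ Finset.range i, (q j - ⌊q j⌋) ≤ (n : ℝ) ∧
            (n : ℝ) < u + ∑ j ∈ Finset.range (i + 1), (q j - ⌊q j⌋)
        then 1 else 0)) :
    (∑ i ∈ Finset.range s, A i = r) ∧
      ∀ i < s, ⌊q i⌋ ≤ A i ∧ A i ≤ ⌈q i⌉ := by
  set F : ℕ → ℝ := fun i => u + ∑ j ∈ Finset.range i, (q j - ⌊q j⌋) with hF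
  have hstep : ∀ i, F (i + 1) = F i + (q i - ⌊q i⌋) := by
    intro i
    simp [hF, Finset.sum_range_succ]; ring
  have hfr : ∀ i, 0 ≤ q i - ⌊q i⌋ ∧ q i - ⌊q i⌋ < 1 := by
    intro i
    constructor
    · linarith [Int.floor_le (q i)]
    · linarith [Int.lt_floor_add_one (q i)]
  have hle : ∀ i, F i ≤ F (i + 1) := by
    intro i; rw [hstep]; linarith [(hfr i).1]
  have hlt : ∀ i, F (i + 1) < F i + 1 := by
    intro i; rw [hstep]; linarith [(hfr i).2]
  have hind : ∀ i, ((if ∃ n : ℤ, F i ≤ (n : ℝ) ∧ (n : ℝ) < F (i + 1)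
      then 1 else 0) : ℤ) = ⌈F (i + 1)⌉ - ⌈F i⌉ := fun i =>
    ind_eq_ceil_sub _ _ (hle i) (hlt i)
  have hAeq : ∀ i, A i = ⌊q i⌋ + (⌈F (i + 1)⌉ - ⌈F i⌉) := by
    intro i
    rw [hA i, ← hind i]
  constructor
  · have hsum2 : ∑ i ∈ Finset.range s, A i =
        (∑ i ∈ Finset.range s, ⌊q i⌋) + (⌈F s⌉ - ⌈F 0⌉) := by
      rw [← Finset.sum_range_sub (fun i => ⌈F i⌉) s, ← Finset.sum_add_distrib]
      exact Finset.sum_congr rfl fun i _ => hAeq i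
    have hF0 : F 0 = u := by simp [hF]
    have hFs : F s = u + ((r : ℝ) - ∑ i ∈ Finset.range s, (⌊q i⌋ : ℝ)) := by
      simp only [hF]
      rw [Finset.sum_sub_distrib, hsum]
    have hFsc : ⌈F s⌉ = ⌈u⌉ + ((r : ℤ) - ∑ i ∈ Finset.range s, ⌊q i⌋) := by
      rw [hFs]
      rw [show u + ((r : ℝ) - ∑ i ∈ Finset.range s, (⌊q i⌋ : ℝ))
        = u + (((r : ℤ) - ∑ i ∈ Finset.range s, ⌊q i⌋ : ℤ) : ℝ) by push_cast; ring]
      exact Int.ceil_add_intCast u _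
    rw [hsum2, hFsc, hF0]
    ring
  · intro i _
    rw [hAeq i]
    have h1 : ⌈F i⌉ ≤ ⌈F (i + 1)⌉ := Int.ceil_le_ceil (hle i)
    have h2 : ⌈F (i + 1)⌉ ≤ ⌈F i⌉ + 1 := by
      have := Int.ceil_le_ceil (hlt i).le
      rwa [Int.ceil_add_one] at this
    refine ⟨by omega, ?_⟩
    by_cases h : ⌈F (i + 1)⌉ = ⌈F i⌉
    · have := Int.floor_le_ceil (q i)
      omega
    · -- indicator is 1, so interval nonempty, so q i is not an integer
      have hd : ⌈F (i + 1)⌉ = ⌈F i⌉ + 1 := by omega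
      have hpos : (⌊q i⌋ : ℝ) < q i := by
        by_contra hc
        push_neg at hc
        have heq : q i - ⌊q i⌋ = 0 := le_antisymm (by linarith) (hfr i).1
        have : F (i + 1) = F i := by rw [hstep, heq]; ring
        rw [this] at hd
        omega
      have : ⌊q i⌋ < ⌈q i⌉ := Int.lt_ceil.mpr hpos
      omega
end

section
/- Let q_1,…,q_s ≥ 0 with Σ_i q_i = r ∈ ℕ, and let U be uniform on [0,1). With A_i(U) = ⌊q_i⌋ plus the indicator that [U + Σ_{j<i}(q_j − ⌊q_j⌋), U + Σ_{j≤i}(q_j − ⌊q_j⌋)) contains an integer, we have E[A_i(U)] = q_i for every i. -/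
open MeasureTheory Classical in
/-- Fairness of the stochastic apportionment scheme: with `U` uniform on
`[0,1)`, the expected allocation to state `i` equals its quota `q i`. -/
theorem stmt_7 (s r : ℕ) (q : ℕ → ℝ) (hq : ∀ i < s, 0 ≤ q i)
    (hsum : ∑ i ∈ Finset.range s, q i = r) :
    ∀ i < s,
      (∫ u in Set.Ico (0 : ℝ) 1,
          ((⌊q i⌋ : ℝ) +
            (if ∃ n : ℤ, u + ∑ j ∈ Finset.range i, (q j - ⌊q j⌋) ≤ (n : ℝ) ∧
                  (n : ℝ) < u + ∑ j ∈ Finset.range (i + 1), (q j - ⌊q j⌋)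
              then (1 : ℝ) else 0)))
        = q i := by
  intro i hi
  set a : ℝ := ∑ j ∈ Finset.range i, (q j - ⌊q j⌋) with ha
  set f : ℝ := Int.fract (q i) with hfdef
  have hbsum : ∑ j ∈ Finset.range (i + 1), (q j - ⌊q j⌋) = a + f := by
    rw [Finset.sum_range_succ]; rw [hfdef, Int.fract]
  have hf0 : 0 ≤ f := Int.fract_nonneg _
  have hf1 : f < 1 := Int.fract_lt_one _
  set t : ℝ := Int.fract (-a) with htdef
  have ht0 : 0 ≤ t := Int.fract_nonneg _
  have ht1 : t < 1 := Int.fract_lt_one _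
  -- characterization of the indicator condition
  have hchar : ∀ u : ℝ, u ∈ Set.Ico (0:ℝ) 1 →
      ((∃ n : ℤ, u + a ≤ (n : ℝ) ∧ (n : ℝ) < u + (a + f)) ↔
        u ∈ (Set.Ioc (t - f) t ∪ Set.Ioo (t + 1 - f) 1)) := by
    intro u hu
    have hfr : Int.fract (-(u + a)) = Int.fract (t - u) := by
      have h : t - u = -(u + a) + ((-⌊-a⌋ : ℤ) : ℝ) := by
        rw [htdef, Int.fract]; push_cast; ring
      rw [h, Int.fract_add_intCast]
    have hmain : (∃ n : ℤ, u + a ≤ (n : ℝ) ∧ (n : ℝ) < u + (a + f)) ↔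
        Int.fract (t - u) < f := by
      rw [← hfr]
      constructor
      · rintro ⟨n, h1, h2⟩
        have heq : Int.fract (-(u + a)) = (n : ℝ) - (u + a) := by
          have : -(u + a) = ((n : ℝ) - (u + a)) + ((-n : ℤ) : ℝ) := by push_cast; ring
          rw [this, Int.fract_add_intCast, Int.fract_eq_self.mpr ⟨by linarith, by linarith⟩]
        rw [heq]; linarith
      · intro h
        refine ⟨-⌊-(u + a)⌋, ?_, ?_⟩
        · have := Int.fract_nonneg (-(u + a))
          rw [Int.fract] at this; push_cast; linarith
        · rw [Int.fract] at h; push_cast; linarith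
    rw [hmain]
    by_cases hut : u ≤ t
    · have hfe : Int.fract (t - u) = t - u :=
        Int.fract_eq_self.mpr ⟨by linarith [hu.1], by linarith [hu.1]⟩
      rw [hfe]
      constructor
      · intro h; exact Or.inl ⟨by linarith, hut⟩
      · rintro (⟨h1, h2⟩ | ⟨h1, h2⟩) <;> linarith
    · push_neg at hut
      have hfe : Int.fract (t - u) = t - u + 1 := by
        have h1 : Int.fract (t - u + 1) = t - u + 1 :=
          Int.fract_eq_self.mpr ⟨by linarith [hu.2], by linarith⟩
        have h2 : Int.fract (t - u + ((1 : ℤ) : ℝ)) = Int.fract (t - u) :=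
          Int.fract_add_intCast _ _
        rw [← h1, ← h2]; norm_num
      rw [hfe]
      constructor
      · intro h; exact Or.inr ⟨by linarith, hu.2⟩
      · rintro (⟨h1, h2⟩ | ⟨h1, h2⟩) <;> linarith
  set T : Set ℝ := Set.Ioc (t - f) t ∪ Set.Ioo (t + 1 - f) 1 with hT
  have hTm : MeasurableSet T := (measurableSet_Ioc.union measurableSet_Ioo)
  -- rewrite the integrand
  have hcong : (∫ u in Set.Ico (0 : ℝ) 1,
        ((⌊q i⌋ : ℝ) +
          (if ∃ n : ℤ, u + ∑ j ∈ Finset.range i, (q j - ⌊q j⌋) ≤ (n : ℝ) ∧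
                (n : ℝ) < u + ∑ j ∈ Finset.range (i + 1), (q j - ⌊q j⌋)
            then (1 : ℝ) else 0)))
      = ∫ u in Set.Ico (0 : ℝ) 1, ((⌊q i⌋ : ℝ) + T.indicator (fun _ => (1:ℝ)) u) := by
    refine setIntegral_congr_fun measurableSet_Ico ?_
    intro u hu
    simp only [← ha, hbsum]
    congr 1
    rw [Set.indicator_apply]
    by_cases h : u ∈ T
    · rw [if_pos ((hchar u hu).mpr h), if_pos h]
    · rw [if_neg (fun hx => h ((hchar u hu).mp hx)), if_neg h]
  rw [hcong]
  have hvol : volume (Set.Ico (0:ℝ) 1) = 1 := by simp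
  have hint1 : IntegrableOn (fun _ : ℝ => (⌊q i⌋ : ℝ)) (Set.Ico (0:ℝ) 1) volume := by
    apply (integrableOn_const_iff enorm_ne_top).mpr; right; rw [hvol]; exact ENNReal.one_lt_top
  have hint2 : IntegrableOn (T.indicator (fun _ => (1:ℝ))) (Set.Ico (0:ℝ) 1) volume := by
    refine Integrable.mono' (g := fun _ => (1:ℝ)) ?_ ?_ ?_
    · apply (integrableOn_const_iff enorm_ne_top).mpr; right; rw [hvol]; exact ENNReal.one_lt_top
    · exact (measurable_const.indicator hTm).aestronglyMeasurable
    · filter_upwards with x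
      rw [Set.indicator_apply]
      split <;> simp
  rw [integral_add hint1 hint2, setIntegral_const, setIntegral_indicator hTm,
    setIntegral_const, measureReal_def, measureReal_def, hvol]
  -- compute the volume of Ico 0 1 ∩ T
  have hvolT : (volume (Set.Ico (0:ℝ) 1 ∩ T)).toReal = f := by
    have hsplit : Set.Ico (0:ℝ) 1 ∩ T =
        (Set.Ico (0:ℝ) 1 ∩ Set.Ioc (t - f) t) ∪ (Set.Ico (0:ℝ) 1 ∩ Set.Ioo (t + 1 - f) 1) := by
      rw [hT, Set.inter_union_distrib_left]
    have hdisj : Disjoint (Set.Ico (0:ℝ) 1 ∩ Set.Ioc (t - f) t)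
        (Set.Ico (0:ℝ) 1 ∩ Set.Ioo (t + 1 - f) 1) := by
      rw [Set.disjoint_left]
      rintro x ⟨_, _, hx2⟩ ⟨_, hy1, _⟩
      linarith
    rw [hsplit, measure_union hdisj (measurableSet_Ico.inter measurableSet_Ioo)]
    by_cases hft : f ≤ t
    · have h1 : Set.Ico (0:ℝ) 1 ∩ Set.Ioc (t - f) t = Set.Ioc (t - f) t := by
        apply Set.inter_eq_self_of_subset_right
        rintro x ⟨hx1, hx2⟩
        exact ⟨by linarith, by linarith⟩
      have h2 : Set.Ioo (t + 1 - f) 1 = ∅ := Set.Ioo_eq_empty (by intro h; linarith)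
      rw [h1, h2, Set.inter_empty, measure_empty, add_zero, Real.volume_Ioc,
        show t - (t - f) = f from by ring, ENNReal.toReal_ofReal hf0]
    · push_neg at hft
      have h1 : Set.Ico (0:ℝ) 1 ∩ Set.Ioc (t - f) t = Set.Icc 0 t := by
        ext x
        constructor
        · rintro ⟨⟨hx1, _⟩, _, hx4⟩; exact ⟨hx1, hx4⟩
        · rintro ⟨hx1, hx2⟩
          exact ⟨⟨hx1, by linarith⟩, by linarith, hx2⟩
      have h2 : Set.Ico (0:ℝ) 1 ∩ Set.Ioo (t + 1 - f) 1 = Set.Ioo (t + 1 - f) 1 := by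
        apply Set.inter_eq_self_of_subset_right
        rintro x ⟨hx1, hx2⟩
        exact ⟨by linarith, hx2⟩
      rw [h1, h2, Real.volume_Icc, Real.volume_Ioo,
        ENNReal.toReal_add ENNReal.ofReal_ne_top ENNReal.ofReal_ne_top,
        ENNReal.toReal_ofReal (by linarith), ENNReal.toReal_ofReal (by linarith)]
      ring
  rw [hvolT]
  simp only [ENNReal.toReal_one, smul_eq_mul, one_mul, one_smul]
  rw [hfdef, Int.fract]; ring
end

section
/- For the stochastic apportionment scheme, the marginal distribution of A_i depends only on q_i: P(A_i = ⌊q_i⌋ + 1) = q_i − ⌊q_i⌋ and P(A_i = ⌊q_i⌋) = 1 − (q_i − ⌊q_i⌋). Consequently, if q and q̃ are two quota vectors (each summing to an integer house size) with q_i ≤ q̃_i for some state i, then A^q_i is stochastically dominated by A^{q̃}_i. -/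
open MeasureTheory Classical

/-- The allocation of the Section-3 stochastic scheme with quotas `q` and
shift `u`. -/
noncomputable def stochAlloc (q : ℕ → ℝ) (i : ℕ) (u : ℝ) : ℤ :=
  ⌊q i⌋ +
    (if ∃ n : ℤ, u + ∑ j ∈ Finset.range i, (q j - ⌊q j⌋) ≤ (n : ℝ) ∧
          (n : ℝ) < u + ∑ j ∈ Finset.range (i + 1), (q j - ⌊q j⌋)
      then 1 else 0)

/-- Characterization of the hitting condition for `u ∈ [0,1)`. -/
lemma cond_iff_aux (S f u : ℝ) (hf1 : f < 1) (hu : u ∈ Set.Ico (0:ℝ) 1) :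
    (∃ n : ℤ, u + S ≤ (n : ℝ) ∧ (n : ℝ) < u + S + f) ↔
      (((⌈S⌉ : ℝ) - S - f < u ∧ u ≤ (⌈S⌉ : ℝ) - S) ∨ (⌈S⌉ : ℝ) - S + 1 - f < u) := by
  obtain ⟨hu0, hu1⟩ := hu
  constructor
  · rintro ⟨n, h1, h2⟩
    have hnge : (⌈S⌉ : ℤ) ≤ n := by
      have : S ≤ (n : ℝ) := le_trans (by linarith) h1
      exact Int.ceil_le.2 this
    have hnle : n ≤ ⌈S⌉ + 1 := by
      have hS : (S : ℝ) ≤ (⌈S⌉ : ℝ) := Int.le_ceil S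
      have hcast : (n : ℝ) < ((⌈S⌉ + 2 : ℤ) : ℝ) := by push_cast; linarith
      have : n < ⌈S⌉ + 2 := by exact_mod_cast hcast
      omega
    rcases eq_or_lt_of_le hnge with h | h
    · left
      rw [← h] at h1 h2
      constructor <;> linarith
    · right
      have h' : (⌈S⌉ + 1 : ℤ) ≤ n := h
      have : ((⌈S⌉ : ℝ) + 1) ≤ (n : ℝ) := by exact_mod_cast h'
      linarith
  · rintro (⟨h1, h2⟩ | h)
    · exact ⟨⌈S⌉, by linarith, by linarith⟩
    · refine ⟨⌈S⌉ + 1, ?_, ?_⟩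
      · push_cast
        have hS : (S : ℝ) ≤ (⌈S⌉ : ℝ) := Int.le_ceil S
        linarith
      · push_cast; linarith

/-- The measure of the hitting set is `f`. -/
lemma vol_cond (S f : ℝ) (hf0 : 0 ≤ f) (hf1 : f < 1) :
    volume {u : ℝ | u ∈ Set.Ico (0:ℝ) 1 ∧
        ∃ n : ℤ, u + S ≤ (n : ℝ) ∧ (n : ℝ) < u + S + f} = ENNReal.ofReal f := by
  set a : ℝ := (⌈S⌉ : ℝ) - S with ha
  have ha0 : 0 ≤ a := by have := Int.le_ceil S; linarith
  have ha1 : a < 1 := by have := Int.ceil_lt_add_one S; linarith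
  have hset : {u : ℝ | u ∈ Set.Ico (0:ℝ) 1 ∧
        ∃ n : ℤ, u + S ≤ (n : ℝ) ∧ (n : ℝ) < u + S + f}
      = Set.Ico (0:ℝ) 1 ∩ (Set.Ioc (a - f) a ∪ Set.Ioi (a + 1 - f)) := by
    ext u
    simp only [Set.mem_setOf_eq, Set.mem_inter_iff, Set.mem_union, Set.mem_Ioc, Set.mem_Ioi]
    constructor
    · rintro ⟨hu, hc⟩
      refine ⟨hu, ?_⟩
      have := (cond_iff_aux S f u hf1 hu).1 hc
      rcases this with ⟨h1, h2⟩ | h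
      · left; exact ⟨by linarith, by linarith⟩
      · right; linarith
    · rintro ⟨hu, hc⟩
      refine ⟨hu, (cond_iff_aux S f u hf1 hu).2 ?_⟩
      rcases hc with ⟨h1, h2⟩ | h
      · left; exact ⟨by linarith, by linarith⟩
      · right; linarith
  rw [hset]
  by_cases hfa : f ≤ a
  · have : Set.Ico (0:ℝ) 1 ∩ (Set.Ioc (a - f) a ∪ Set.Ioi (a + 1 - f)) = Set.Ioc (a - f) a := by
      ext u
      simp only [Set.mem_inter_iff, Set.mem_Ico, Set.mem_union, Set.mem_Ioc, Set.mem_Ioi]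
      constructor
      · rintro ⟨⟨hu0, hu1⟩, (⟨h1, h2⟩ | h)⟩
        · exact ⟨h1, h2⟩
        · exfalso; linarith
      · rintro ⟨h1, h2⟩
        exact ⟨⟨by linarith, by linarith⟩, Or.inl ⟨h1, h2⟩⟩
    rw [this, Real.volume_Ioc]
    ring_nf
  · push_neg at hfa
    have : Set.Ico (0:ℝ) 1 ∩ (Set.Ioc (a - f) a ∪ Set.Ioi (a + 1 - f))
        = Set.Icc 0 a ∪ Set.Ioo (a + 1 - f) 1 := by
      ext u
      simp only [Set.mem_inter_iff, Set.mem_Ico, Set.mem_union, Set.mem_Ioc, Set.mem_Ioi,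
        Set.mem_Icc, Set.mem_Ioo]
      constructor
      · rintro ⟨⟨hu0, hu1⟩, (⟨h1, h2⟩ | h)⟩
        · left; exact ⟨hu0, h2⟩
        · right; exact ⟨h, hu1⟩
      · rintro (⟨h1, h2⟩ | ⟨h1, h2⟩)
        · exact ⟨⟨h1, by linarith⟩, Or.inl ⟨by linarith, h2⟩⟩
        · exact ⟨⟨by linarith, h2⟩, Or.inr h1⟩
    rw [this, measure_union (by
        rw [Set.disjoint_left]
        rintro u ⟨hu0, hua⟩ ⟨h1, h2⟩
        linarith) measurableSet_Ioo,
      Real.volume_Icc, Real.volume_Ioo, ← ENNReal.ofReal_add (by linarith) (by linarith)]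
    ring_nf

/-- The hitting set is measurable-friendly: it equals an explicit set. -/
lemma cond_set_eq (S f : ℝ) (hf1 : f < 1) :
    {u : ℝ | u ∈ Set.Ico (0:ℝ) 1 ∧
        ∃ n : ℤ, u + S ≤ (n : ℝ) ∧ (n : ℝ) < u + S + f}
      = Set.Ico (0:ℝ) 1 ∩ (Set.Ioc ((⌈S⌉:ℝ) - S - f) ((⌈S⌉:ℝ) - S)
          ∪ Set.Ioi ((⌈S⌉:ℝ) - S + 1 - f)) := by
  ext u
  simp only [Set.mem_setOf_eq, Set.mem_inter_iff, Set.mem_union, Set.mem_Ioc, Set.mem_Ioi]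
  constructor
  · rintro ⟨hu, hc⟩
    exact ⟨hu, (cond_iff_aux S f u hf1 hu).1 hc⟩
  · rintro ⟨hu, hc⟩
    exact ⟨hu, (cond_iff_aux S f u hf1 hu).2 hc⟩


lemma frac_bounds (x : ℝ) : 0 ≤ x - ⌊x⌋ ∧ x - ⌊x⌋ < 1 := by
  have h1 := Int.floor_le x
  have h2 := Int.lt_floor_add_one x
  constructor <;> linarith

lemma alloc_eq_succ_iff (q : ℕ → ℝ) (i : ℕ) (u : ℝ) :
    stochAlloc q i u = ⌊q i⌋ + 1 ↔
      ∃ n : ℤ, u + (∑ j ∈ Finset.range i, (q j - ⌊q j⌋)) ≤ (n : ℝ) ∧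
        (n : ℝ) < u + (∑ j ∈ Finset.range i, (q j - ⌊q j⌋)) + (q i - ⌊q i⌋) := by
  unfold stochAlloc
  rw [Finset.sum_range_succ]
  split_ifs with h
  · constructor
    · intro _
      obtain ⟨n, h1, h2⟩ := h
      exact ⟨n, h1, by linarith⟩
    · intro _; rfl
  · constructor
    · intro habs; omega
    · rintro ⟨n, h1, h2⟩
      exact absurd ⟨n, h1, by linarith⟩ h

lemma alloc_eq_floor_iff (q : ℕ → ℝ) (i : ℕ) (u : ℝ) :
    stochAlloc q i u = ⌊q i⌋ ↔
      ¬ ∃ n : ℤ, u + (∑ j ∈ Finset.range i, (q j - ⌊q j⌋)) ≤ (n : ℝ) ∧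
        (n : ℝ) < u + (∑ j ∈ Finset.range i, (q j - ⌊q j⌋)) + (q i - ⌊q i⌋) := by
  unfold stochAlloc
  rw [Finset.sum_range_succ]
  split_ifs with h
  · constructor
    · intro habs; omega
    · rintro hn
      obtain ⟨n, h1, h2⟩ := h
      exact absurd ⟨n, h1, by linarith⟩ hn
  · constructor
    · rintro _ ⟨n, h1, h2⟩
      exact h ⟨n, h1, by linarith⟩
    · intro _; omega

lemma vol_alloc_succ (q : ℕ → ℝ) (i : ℕ) :
    volume {u : ℝ | u ∈ Set.Ico (0 : ℝ) 1 ∧ stochAlloc q i u = ⌊q i⌋ + 1}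
      = ENNReal.ofReal (q i - ⌊q i⌋) := by
  obtain ⟨hf0, hf1⟩ := frac_bounds (q i)
  rw [show {u : ℝ | u ∈ Set.Ico (0 : ℝ) 1 ∧ stochAlloc q i u = ⌊q i⌋ + 1}
      = {u : ℝ | u ∈ Set.Ico (0:ℝ) 1 ∧
          ∃ n : ℤ, u + (∑ j ∈ Finset.range i, (q j - ⌊q j⌋)) ≤ (n : ℝ) ∧
            (n : ℝ) < u + (∑ j ∈ Finset.range i, (q j - ⌊q j⌋)) + (q i - ⌊q i⌋)} by
    ext u; exact and_congr_right fun _ => alloc_eq_succ_iff q i u]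
  exact vol_cond _ _ hf0 hf1

lemma vol_alloc_floor (q : ℕ → ℝ) (i : ℕ) :
    volume {u : ℝ | u ∈ Set.Ico (0 : ℝ) 1 ∧ stochAlloc q i u = ⌊q i⌋}
      = ENNReal.ofReal (1 - (q i - ⌊q i⌋)) := by
  obtain ⟨hf0, hf1⟩ := frac_bounds (q i)
  set S : ℝ := ∑ j ∈ Finset.range i, (q j - ⌊q j⌋) with hS
  set f : ℝ := q i - ⌊q i⌋ with hf
  set E : Set ℝ := {u : ℝ | u ∈ Set.Ico (0:ℝ) 1 ∧
      ∃ n : ℤ, u + S ≤ (n : ℝ) ∧ (n : ℝ) < u + S + f} with hE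
  have hEsub : E ⊆ Set.Ico (0:ℝ) 1 := fun u hu => hu.1
  have hEmeas : MeasurableSet E := by
    rw [hE, cond_set_eq S f hf1]
    exact measurableSet_Ico.inter (measurableSet_Ioc.union measurableSet_Ioi)
  have hEvol : volume E = ENNReal.ofReal f := vol_cond S f hf0 hf1
  have hset : {u : ℝ | u ∈ Set.Ico (0 : ℝ) 1 ∧ stochAlloc q i u = ⌊q i⌋}
      = Set.Ico (0:ℝ) 1 \ E := by
    ext u
    simp only [hE, Set.mem_setOf_eq, Set.mem_diff, not_and]
    constructor
    · rintro ⟨hu, h⟩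
      exact ⟨hu, fun _ => (alloc_eq_floor_iff q i u).1 h⟩
    · rintro ⟨hu, h⟩
      exact ⟨hu, (alloc_eq_floor_iff q i u).2 (h hu)⟩
  rw [hset, measure_diff hEsub hEmeas.nullMeasurableSet (by rw [hEvol]; exact ENNReal.ofReal_ne_top),
    hEvol, Real.volume_Ico, ENNReal.ofReal_sub _ hf0]
  norm_num

lemma vol_alloc_ge (q : ℕ → ℝ) (i : ℕ) (k : ℤ) :
    volume {u : ℝ | u ∈ Set.Ico (0 : ℝ) 1 ∧ k ≤ stochAlloc q i u}
      = min 1 (ENNReal.ofReal (q i + 1 - k)) := by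
  obtain ⟨hf0, hf1⟩ := frac_bounds (q i)
  have hfloor_le : (⌊q i⌋ : ℝ) ≤ q i := Int.floor_le (q i)
  have hbd : ∀ u, ⌊q i⌋ ≤ stochAlloc q i u ∧ stochAlloc q i u ≤ ⌊q i⌋ + 1 := by
    intro u
    unfold stochAlloc
    split_ifs <;> omega
  by_cases h1 : k ≤ ⌊q i⌋
  · have hset : {u : ℝ | u ∈ Set.Ico (0 : ℝ) 1 ∧ k ≤ stochAlloc q i u} = Set.Ico (0:ℝ) 1 := by
      ext u
      simp only [Set.mem_setOf_eq, and_iff_left_iff_imp]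
      intro _
      exact le_trans h1 (hbd u).1
    have hk : (k : ℝ) ≤ ⌊q i⌋ := by exact_mod_cast h1
    have hones : (1 : ENNReal) ≤ ENNReal.ofReal (q i + 1 - k) :=
      ENNReal.one_le_ofReal.2 (by linarith)
    rw [hset, Real.volume_Ico, min_eq_left hones]
    norm_num
  · by_cases h2 : k = ⌊q i⌋ + 1
    · subst h2
      have hset : {u : ℝ | u ∈ Set.Ico (0 : ℝ) 1 ∧ (⌊q i⌋ + 1 : ℤ) ≤ stochAlloc q i u}
          = {u : ℝ | u ∈ Set.Ico (0 : ℝ) 1 ∧ stochAlloc q i u = ⌊q i⌋ + 1} := by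
        ext u
        refine and_congr_right fun _ => ?_
        have := (hbd u).2
        omega
      have hval : q i + 1 - ((⌊q i⌋ + 1 : ℤ) : ℝ) = q i - ⌊q i⌋ := by push_cast; ring
      rw [hset, vol_alloc_succ, hval, min_eq_right (ENNReal.ofReal_le_one.2 (by linarith))]
    · have h3 : ⌊q i⌋ + 2 ≤ k := by omega
      have hset : {u : ℝ | u ∈ Set.Ico (0 : ℝ) 1 ∧ k ≤ stochAlloc q i u} = ∅ := by
        ext u
        simp only [Set.mem_setOf_eq, Set.mem_empty_iff_false, iff_false, not_and]
        intro _ hk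
        have := (hbd u).2
        omega
      have hk : ((⌊q i⌋ : ℝ) + 2) ≤ (k : ℝ) := by exact_mod_cast h3
      have hz : ENNReal.ofReal (q i + 1 - (k : ℝ)) = 0 :=
        ENNReal.ofReal_eq_zero.2 (by linarith)
      rw [hset, measure_empty, hz, min_eq_right (zero_le_one)]

/-- The marginal law of `A i` depends only on `q i`:
`P(A i = ⌊q i⌋ + 1) = frac (q i)` and `P(A i = ⌊q i⌋) = 1 - frac (q i)`;
consequently, if `q i ≤ q̃ i` then `A^q i` is stochastically dominated by
`A^q̃ i`. -/
theorem stmt_17 (s r r' : ℕ) (q q' : ℕ → ℝ)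
    (hq : ∀ k < s, 0 ≤ q k) (hq' : ∀ k < s, 0 ≤ q' k)
    (hqsum : ∑ k ∈ Finset.range s, q k = r)
    (hq'sum : ∑ k ∈ Finset.range s, q' k = r')
    (i : ℕ) (hi : i < s) :
    (volume {u : ℝ | u ∈ Set.Ico (0 : ℝ) 1 ∧ stochAlloc q i u = ⌊q i⌋ + 1}
        = ENNReal.ofReal (q i - ⌊q i⌋) ∧
      volume {u : ℝ | u ∈ Set.Ico (0 : ℝ) 1 ∧ stochAlloc q i u = ⌊q i⌋}
        = ENNReal.ofReal (1 - (q i - ⌊q i⌋))) ∧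
    (q i ≤ q' i →
      ∀ k : ℤ,
        volume {u : ℝ | u ∈ Set.Ico (0 : ℝ) 1 ∧ k ≤ stochAlloc q i u} ≤
          volume {u : ℝ | u ∈ Set.Ico (0 : ℝ) 1 ∧ k ≤ stochAlloc q' i u}) := by
  refine ⟨⟨vol_alloc_succ q i, vol_alloc_floor q i⟩, fun hle k => ?_⟩
  rw [vol_alloc_ge, vol_alloc_ge]
  exact min_le_min le_rfl (ENNReal.ofReal_le_ofReal (by linarith))
end
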